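/- For a point x₀ ∈ X, the following are equivalent: (i) x₀ is topologically free; (ii) letting Y denote the closure of Orb(x₀) in X, for every g ∈ G \ {1} the set {y ∈ X_{g⁻¹} ∩ Y : θ_g(y) = y} has empty interior in the subspace topology of Y. -/

import Mathlib

/-- A (topological) partial action of a discrete group `G` on a topological space `X`:
open sets `Xg g` and homeomorphisms `θ g : Xg g⁻¹ → Xg g` (encoded as globally defined
maps that are continuous on their domains, with continuous inverse `θ g⁻¹`). -/
structure PartialAction (G : Type*) [Group G] (X : Type*) [TopologicalSpace X] where
  Xg : G → Set X
  θ : G → X → X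
  isOpen_Xg : ∀ g : G, IsOpen (Xg g)
  Xg_one : Xg 1 = Set.univ
  θ_one : ∀ x : X, θ 1 x = x
  mapsTo : ∀ g : G, ∀ x ∈ Xg g⁻¹, θ g x ∈ Xg g
  image_inter : ∀ g h : G, θ g '' (Xg g⁻¹ ∩ Xg h) = Xg g ∩ Xg (g * h)
  θ_comp : ∀ g h : G, ∀ x : X, x ∈ Xg h⁻¹ → x ∈ Xg (g * h)⁻¹ → θ g (θ h x) = θ (g * h) x
  continuousOn : ∀ g : G, ContinuousOn (θ g) (Xg g⁻¹)

namespace PartialAction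

variable {G : Type*} [Group G] {X : Type*} [TopologicalSpace X]

/-- `S x₀ = {g ∈ G : x₀ ∈ X_{g⁻¹}}`. -/
def S (P : PartialAction G X) (x₀ : X) : Set G := {g : G | x₀ ∈ P.Xg g⁻¹}

/-- The orbit of `x₀`:  `Orb(x₀) = {θ_g(x₀) : g ∈ S x₀}`. -/
def orbit (P : PartialAction G X) (x₀ : X) : Set X :=
  {y : X | ∃ g : G, x₀ ∈ P.Xg g⁻¹ ∧ P.θ g x₀ = y}

/-- The isotropy group `H x₀ = {g ∈ S x₀ : θ_g(x₀) = x₀}`. -/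
def isotropy (P : PartialAction G X) (x₀ : X) : Set G :=
  {g : G | x₀ ∈ P.Xg g⁻¹ ∧ P.θ g x₀ = x₀}

/-- A point `x₀` is topologically free if for every `g ≠ 1` and every open `V` with
`x₀ ∈ V ⊆ X_{g⁻¹}` there is `y ∈ V ∩ Orb(x₀)` with `θ_g(y) ≠ y`. -/
def TopFreePoint (P : PartialAction G X) (x₀ : X) : Prop :=
  ∀ g : G, g ≠ 1 → ∀ V : Set X, IsOpen V → x₀ ∈ V → V ⊆ P.Xg g⁻¹ →
    ∃ y ∈ V ∩ P.orbit x₀, P.θ g y ≠ y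

/-- A point `x` is strongly regular if for every `h` fixing `x` there is an open
`V` with `x ∈ V ⊆ X_{h⁻¹}` on which `θ_h` is the identity. -/
def StronglyRegular (P : PartialAction G X) (x : X) : Prop :=
  ∀ h : G, x ∈ P.Xg h⁻¹ → P.θ h x = x →
    ∃ V : Set X, IsOpen V ∧ x ∈ V ∧ V ⊆ P.Xg h⁻¹ ∧ ∀ y ∈ V, P.θ h y = y

end PartialAction

namespace PartialAction

variable {G : Type*} [Group G] {X : Type*} [TopologicalSpace X]

lemma mem_Xg_one' (P : PartialAction G X) (x : X) : x ∈ P.Xg 1 := by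
  simp [P.Xg_one]

lemma theta_inv_theta (P : PartialAction G X) {g : G} {x : X} (hx : x ∈ P.Xg g⁻¹) :
    P.θ g⁻¹ (P.θ g x) = x := by
  have := P.θ_comp g⁻¹ g x hx (by simp [P.Xg_one])
  simpa [P.θ_one] using this

lemma mem_of_theta_mem (P : PartialAction G X) {h A : G} {x : X}
    (hx : x ∈ P.Xg h⁻¹) (hθ : P.θ h x ∈ P.Xg A) : x ∈ P.Xg (h⁻¹ * A) := by
  have h1 : P.θ h x ∈ P.Xg h := P.mapsTo h x hx
  have h2 : P.θ h x ∈ P.Xg (h⁻¹)⁻¹ ∩ P.Xg A := by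
    refine ⟨?_, hθ⟩; simpa using h1
  have h3 : P.θ h⁻¹ (P.θ h x) ∈ P.Xg h⁻¹ ∩ P.Xg (h⁻¹ * A) := by
    rw [← P.image_inter h⁻¹ A]; exact Set.mem_image_of_mem _ h2
  rw [P.theta_inv_theta hx] at h3
  exact h3.2

end PartialAction

/-- A point `x₀` is topologically free if and only if, on the closure `Y`
of its orbit, every fixed-point set `{y ∈ X_{g⁻¹} ∩ Y : θ_g y = y}` (for `g ≠ 1`) has
empty interior in the subspace topology of `Y`. -/
theorem topFreePoint_iff_restriction_topologically_free
    {G X : Type*} [Group G] [TopologicalSpace X]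
    [T2Space X] [LocallyCompactSpace X] [TotallyDisconnectedSpace X]
    (P : PartialAction G X) (hclopen : ∀ g : G, IsClopen (P.Xg g)) (x₀ : X) :
    P.TopFreePoint x₀ ↔
      ∀ g : G, g ≠ 1 →
        interior (Subtype.val ⁻¹' {y : X | y ∈ P.Xg g⁻¹ ∧ P.θ g y = y} :
          Set (closure (P.orbit x₀))) = ∅ := by
  constructor
  · -- forward direction
    intro htf g hg
    by_contra hne
    obtain ⟨p, hp⟩ := Set.nonempty_iff_ne_empty.mpr hne
    -- extract an open set U of X
    obtain ⟨T, hTsub, hTopen, hpT⟩ := mem_interior.mp hp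
    obtain ⟨U, hUopen, hUeq⟩ := isOpen_induced_iff.mp hTopen
    have hpU : (p : X) ∈ U := by rw [← hUeq] at hpT; exact hpT
    have hUFix : ∀ y : X, y ∈ closure (P.orbit x₀) → y ∈ U →
        y ∈ P.Xg g⁻¹ ∧ P.θ g y = y := by
      intro y hyY hyU
      have : (⟨y, hyY⟩ : closure (P.orbit x₀)) ∈ T := by rw [← hUeq]; exact hyU
      exact hTsub this
    -- find an orbit point in U
    have hpY : (p : X) ∈ closure (P.orbit x₀) := p.2
    obtain ⟨y₁, hy₁U, hy₁orb⟩ := (mem_closure_iff.mp hpY U hUopen hpU)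
    obtain ⟨h, hx₀h, hθh⟩ := hy₁orb
    have hy₁Y : y₁ ∈ closure (P.orbit x₀) := subset_closure ⟨h, hx₀h, hθh⟩
    obtain ⟨hy₁g, hy₁fix⟩ := hUFix y₁ hy₁Y hy₁U
    have hy₁h : y₁ ∈ P.Xg h := hθh ▸ P.mapsTo h x₀ hx₀h
    have hy₁gih : y₁ ∈ P.Xg (g⁻¹ * h) := P.mem_of_theta_mem hy₁g (by rw [hy₁fix]; exact hy₁h)
    have hkne : h⁻¹ * g * h ≠ 1 := by
      intro hk1
      apply hg
      have h3 : g = h * (h⁻¹ * g * h) * h⁻¹ := by group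
      rw [hk1] at h3
      simpa using h3
    -- the open set V around x₀
    set W : Set X := U ∩ P.Xg g⁻¹ ∩ P.Xg h ∩ P.Xg (g⁻¹ * h) with hW
    have hWopen : IsOpen W := by
      refine (((hUopen.inter (P.isOpen_Xg g⁻¹)).inter (P.isOpen_Xg h)).inter (P.isOpen_Xg _))
    set V : Set X := P.Xg h⁻¹ ∩ P.θ h ⁻¹' W with hV
    have hVopen : IsOpen V := (P.continuousOn h).isOpen_inter_preimage (P.isOpen_Xg h⁻¹) hWopen
    have hx₀V : x₀ ∈ V := by
      refine ⟨hx₀h, ?_⟩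
      show P.θ h x₀ ∈ W
      rw [hθh]
      exact ⟨⟨⟨hy₁U, hy₁g⟩, hy₁h⟩, hy₁gih⟩
    have hVsub : V ⊆ P.Xg (h⁻¹ * g * h)⁻¹ := by
      intro x hx
      have := P.mem_of_theta_mem hx.1 hx.2.2
      have hkinv : (h⁻¹ * g * h)⁻¹ = h⁻¹ * (g⁻¹ * h) := by group
      rw [hkinv]; exact this
    obtain ⟨y, ⟨hyV, hyorb⟩, hyne⟩ := htf (h⁻¹ * g * h) hkne V hVopen hx₀V hVsub
    obtain ⟨m, hx₀m, hθm⟩ := hyorb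
    have hyh : y ∈ P.Xg h⁻¹ := hyV.1
    have hzW : P.θ h y ∈ W := hyV.2
    set z : X := P.θ h y with hz
    -- z is an orbit point
    have hx₀hm : x₀ ∈ P.Xg (h * m)⁻¹ := by
      have : x₀ ∈ P.Xg (m⁻¹ * h⁻¹) := P.mem_of_theta_mem hx₀m (by rw [hθm]; exact hyh)
      rw [mul_inv_rev]; exact this
    have hzorb : z ∈ P.orbit x₀ := by
      refine ⟨h * m, hx₀hm, ?_⟩
      rw [← P.θ_comp h m x₀ hx₀m hx₀hm, hθm]
    have hzY : z ∈ closure (P.orbit x₀) := subset_closure hzorb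
    obtain ⟨hzg, hzfix⟩ := hUFix z hzY hzW.1.1.1
    -- compute θ k y = y, contradiction
    have hygh : y ∈ P.Xg (g * h)⁻¹ := by
      rw [mul_inv_rev]; exact P.mem_of_theta_mem hyh hzg
    have h1 : P.θ (g * h) y = z := by
      rw [← P.θ_comp g h y hyh hygh, ← hz, hzfix]
    have hykinv : y ∈ P.Xg (h⁻¹ * (g * h))⁻¹ := by
      have heq : (h⁻¹ * g * h)⁻¹ = (h⁻¹ * (g * h))⁻¹ := by group
      rw [← heq]; exact hVsub hyV
    have h2 : P.θ (h⁻¹ * (g * h)) y = P.θ h⁻¹ z := by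
      rw [← P.θ_comp h⁻¹ (g * h) y hygh hykinv, h1]
    have h3 : P.θ h⁻¹ z = y := P.theta_inv_theta hyh
    apply hyne
    have hk2 : h⁻¹ * g * h = h⁻¹ * (g * h) := by group
    rw [hk2, h2, h3]
  · -- converse direction
    intro hint g hg V hVopen hx₀V hVsub
    by_contra hcon
    push_neg at hcon
    have hx₀orb : x₀ ∈ P.orbit x₀ := ⟨1, by simp [P.Xg_one], P.θ_one x₀⟩
    have hx₀Y : x₀ ∈ closure (P.orbit x₀) := subset_closure hx₀orb
    -- the fixed-point set is closed
    set F : Set X := {y : X | y ∈ P.Xg g⁻¹ ∧ P.θ g y = y} with hF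
    have hFclosed : IsClosed F := by
      have hC : IsClosed (P.Xg g⁻¹) := (hclopen g⁻¹).1
      have : F = P.Xg g⁻¹ ∩ (fun x => (P.θ g x, x)) ⁻¹' Set.diagonal X := by
        ext x
        simp [hF, Set.diagonal, and_comm, eq_comm]
      rw [this]
      exact ((P.continuousOn g).prodMk continuousOn_id).preimage_isClosed_of_isClosed
        hC isClosed_diagonal
    -- V ∩ closure(orbit) ⊆ F
    have hsub : closure (P.orbit x₀) ∩ V ⊆ F := by
      intro y ⟨hyY, hyV⟩
      have : y ∈ closure (V ∩ P.orbit x₀) := by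
        have := hVopen.inter_closure (t := P.orbit x₀) ⟨hyV, hyY⟩
        exact this
      have hsubF : V ∩ P.orbit x₀ ⊆ F := by
        rintro w ⟨hwV, hworb⟩
        exact ⟨hVsub hwV, hcon w ⟨hwV, hworb⟩⟩
      exact hFclosed.closure_subset ((closure_mono hsubF) this)
    -- x₀ gives a point in the interior, contradiction
    have hmem : (⟨x₀, hx₀Y⟩ : closure (P.orbit x₀)) ∈
        interior (Subtype.val ⁻¹' F : Set (closure (P.orbit x₀))) := by
      apply mem_interior.mpr
      refine ⟨Subtype.val ⁻¹' V, ?_, continuous_subtype_val.isOpen_preimage V hVopen, hx₀V⟩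
      intro q hq
      exact hsub ⟨q.2, hq⟩
    rw [hint g hg] at hmem
    exact hmem
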